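/- Let μ : {a,b}* → Γ* be an injective morphism, let φ = (ab, a), φ̃ = (ba, a), and let E = (b, a) be the exchange morphism. Then μ is bifix (neither of μ(a), μ(b) is a prefix of the other, and neither is a suffix of the other) if and only if for all morphisms ψ : {a,b}* → Γ* and χ : {a,b}* → {a,b}* such that μ = ψ ∘ χ, it holds that χ ∉ {φ, φ ∘ E, φ̃, φ̃ ∘ E}. -/
import Mathlib


/-- `wpow z k` is the word `z` repeated `k` times, i.e. `z^k`. -/
def wpow {α : Type*} (z : List α) (k : ℕ) : List α := (List.replicate k z).flatten

/-- Apply the morphism determined by the letter images `f` to the word `w`. -/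
def mApply {α β : Type*} (f : α → List β) (w : List α) : List β := w.flatMap f

/-- A nonempty word is primitive if it is a `k`-th power only for `k = 1`. -/
def Primitive {α : Type*} (w : List α) : Prop :=
  w ≠ [] ∧ ∀ (z : List α) (k : ℕ), w = wpow z k → k = 1

/-- A morphism is primitivity-preserving if it maps primitive words to primitive words. -/
def PrimPreserving {α β : Type*} (f : α → List β) : Prop :=
  ∀ w, Primitive w → Primitive (mApply f w)

/-- A primitive word `w` is a `μ`-power (for `μ` given by letter images `f`)
if `μ(w) = z^k` for a primitive `z` and `k > 1`.  `P^μ = {w | MuPower f w}`. -/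
def MuPower {α β : Type*} (f : α → List β) (w : List α) : Prop :=
  Primitive w ∧ ∃ (z : List β) (k : ℕ), Primitive z ∧ 1 < k ∧ mApply f w = wpow z k

/-- `u` is a circular factor of `w`: a factor of some rotation of `w`. -/
def CircFactor {α : Type*} (u w : List α) : Prop :=
  ∃ w', w ~r w' ∧ u <:+: w'

/-- The set of circular factors of words in the language `L`. -/
def CircFactLang {α : Type*} (L : Set (List α)) : Set (List α) :=
  {u | ∃ w ∈ L, CircFactor u w}

/-- `(u₁, u₂)` is a synchronization pair of `u₁ ++ u₂` on `μ(L)`. -/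
def SyncPair {α β : Type*} (f : α → List β) (L : Set (List α)) (u₁ u₂ : List β) : Prop :=
  ∀ (v₁ v₂ : List β) (g : List α), g ∈ CircFactLang L →
    v₁ ++ (u₁ ++ u₂) ++ v₂ = mApply f g →
    ∃ g₁ ∈ CircFactLang L, ∃ g₂ ∈ CircFactLang L,
      g₁ ++ g₂ = g ∧ v₁ ++ u₁ = mApply f g₁ ∧ u₂ ++ v₂ = mApply f g₂

/-- `u` admits a synchronization pair on `μ(L)`. -/
def HasSyncPair {α β : Type*} (f : α → List β) (L : Set (List α)) (u : List β) : Prop :=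
  ∃ u₁ u₂, u = u₁ ++ u₂ ∧ SyncPair f L u₁ u₂

/-- `μ` is synchronizing with finite delay on `μ(L)`. -/
def SyncFiniteDelay {α β : Type*} (f : α → List β) (L : Set (List α)) : Prop :=
  ∃ K : ℕ, 0 < K ∧ ∀ w ∈ L, ∀ u, CircFactor u (mApply f w) → K ≤ u.length →
    HasSyncPair f L u

/-- An (injective) morphism is recognizable: every nonempty word in the image and every
rotation of it has a unique factorization `w' = q ⬝ μ(z) ⬝ p` with `p ⬝ q = μ(c)`, `p ≠ ε`. -/
def Recognizable {α β : Type*} (f : α → List β) : Prop :=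
  ∀ w ∈ Set.range (mApply f), w ≠ [] → ∀ w', w ~r w' →
    ∃! pqzc : List β × List β × List α × α,
      pqzc.1 ≠ [] ∧ w' = pqzc.2.1 ++ mApply f pqzc.2.2.1 ++ pqzc.1 ∧
        pqzc.1 ++ pqzc.2.1 = f pqzc.2.2.2

/-- The Burrows–Wheeler transform: last letters of the lexicographically sorted rotations. -/
def bwt {Γ : Type*} [LinearOrder Γ] (w : List Γ) : List Γ :=
  (List.insertionSort (· ≤ ·) ((List.range w.length).map (fun i => w.rotate i))).filterMap
    List.getLast?

/-- The number of maximal runs of equal consecutive letters. -/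
def runCount {Γ : Type*} [DecidableEq Γ] (l : List Γ) : ℕ :=
  (l.destutter (· ≠ ·)).length

/-- `r(w)`: the number of BWT-runs of `w`. -/
def rBWT {Γ : Type*} [LinearOrder Γ] (w : List Γ) : ℕ := runCount (bwt w)

/-- The morphism `ρ_p = (a, b^p)`, with `a = false`, `b = true`. -/
def rho (p : ℕ) : Bool → List Bool := fun c => bif c then List.replicate p true else [false]

/-- The exchange morphism `E = (b, a)`. -/
def Eswap : Bool → List Bool := fun c => [!c]

/-- The Fibonacci morphism `φ = (ab, a)`. -/
def phi : Bool → List Bool := fun c => bif c then [false] else [false, true]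

/-- The composition `φ ∘ E = (a, ab)`. -/
def phiE : Bool → List Bool := fun c => bif c then [false, true] else [false]

/-- The morphism `φ̃ = (ba, a)`. -/
def phiT : Bool → List Bool := fun c => bif c then [false] else [true, false]

/-- The composition `φ̃ ∘ E = (a, ba)`. -/
def phiTE : Bool → List Bool := fun c => bif c then [true, false] else [false]

theorem stmt19 {Γ : Type*} (μ : Bool → List Γ) (hinj : Function.Injective (mApply μ)) :
    (¬ μ false <+: μ true ∧ ¬ μ true <+: μ false ∧
     ¬ μ false <:+ μ true ∧ ¬ μ true <:+ μ false) ↔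
      ∀ (ψ : Bool → List Γ) (χ : Bool → List Bool),
        (∀ c, μ c = mApply ψ (χ c)) →
          (χ ≠ phi ∧ χ ≠ phiE ∧ χ ≠ phiT ∧ χ ≠ phiTE) := by
  constructor
  · rintro ⟨h1, h2, h3, h4⟩ ψ χ hc
    refine ⟨?_, ?_, ?_, ?_⟩ <;> rintro rfl
    · have ha := hc false; have hb := hc true
      simp [mApply, phi] at ha hb
      exact h2 ⟨ψ true, by rw [hb, ha]⟩
    · have ha := hc false; have hb := hc true
      simp [mApply, phiE] at ha hb
      exact h1 ⟨ψ true, by rw [ha, hb]⟩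
    · have ha := hc false; have hb := hc true
      simp [mApply, phiT] at ha hb
      exact h4 ⟨ψ true, by rw [hb, ha]⟩
    · have ha := hc false; have hb := hc true
      simp [mApply, phiTE] at ha hb
      exact h3 ⟨ψ true, by rw [ha, hb]⟩
  · intro h
    refine ⟨?_, ?_, ?_, ?_⟩
    · rintro ⟨v, hv⟩
      exact (h (fun c => bif c then v else μ false) phiE
        (by intro c; cases c <;> simp [mApply, phiE, ← hv])).2.1 rfl
    · rintro ⟨v, hv⟩
      exact (h (fun c => bif c then v else μ true) phi
        (by intro c; cases c <;> simp [mApply, phi, ← hv])).1 rfl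
    · rintro ⟨v, hv⟩
      exact (h (fun c => bif c then v else μ false) phiTE
        (by intro c; cases c <;> simp [mApply, phiTE, ← hv])).2.2.2 rfl
    · rintro ⟨v, hv⟩
      exact (h (fun c => bif c then v else μ true) phiT
        (by intro c; cases c <;> simp [mApply, phiT, ← hv])).2.2.1 rfl
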